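/- Let X be a complex Banach space and L a bounded linear operator on X that is power-bounded, i.e. sup_{n≥0} ‖L^n‖ < ∞. Let λ ∈ ℂ with |λ| = 1, and let Π be a bounded projection on X commuting with L such that ((L − λI)Π)^m = 0 for some integer m ≥ 1. Then (L − λI)Π = 0; that is, a power-bounded operator admits no nontrivial Jordan block at an eigenvalue of modulus one. -/

import Mathlib

lemma jordan_key {X : Type*} [NormedAddCommGroup X] [NormedSpace ℂ X]
    (L A : X →L[ℂ] X) (lam : ℂ) (hlam : ‖lam‖ = 1)
    (D : ℝ) (hb : ∀ n : ℕ, ‖L ^ n * A‖ ≤ D)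
    (h2 : (L - lam • 1) ^ 2 * A = 0) :
    (L - lam • 1) * A = 0 := by
  set N := (L - lam • 1) * A with hN
  have hLA : L * A = lam • A + N := by
    rw [hN, sub_mul, smul_mul_assoc, one_mul]; abel
  have hLN : L * N = lam • N := by
    have : (L - lam • 1) * N = 0 := by
      rw [hN, ← mul_assoc, ← sq, h2]
    have h' := this
    rw [sub_mul, smul_mul_assoc, one_mul, sub_eq_zero] at h'
    exact h'
  have claim : ∀ n : ℕ, L ^ (n + 1) * A = lam ^ (n + 1) • A + ((n + 1 : ℕ) : ℂ) • (lam ^ n • N) := by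
    intro n
    induction n with
    | zero => simp [hLA]
    | succ k ih =>
      have : L ^ (k + 2) = L * L ^ (k + 1) := by rw [← pow_succ']
      rw [this, mul_assoc, ih, mul_add, mul_smul_comm, mul_smul_comm, mul_smul_comm, hLA, hLN]
      have hc : ((k + 2 : ℕ) : ℂ) = ((k + 1 : ℕ) : ℂ) + 1 := by push_cast; ring
      rw [hc]
      module
  have bound : ∀ n : ℕ, ((n + 1 : ℕ) : ℝ) * ‖N‖ ≤ D + ‖A‖ := by
    intro n
    have h := claim n
    have h' : ((n + 1 : ℕ) : ℂ) • (lam ^ n • N) = L ^ (n + 1) * A - lam ^ (n + 1) • A := by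
      rw [h]; abel
    have hnorm : ‖((n + 1 : ℕ) : ℂ) • (lam ^ n • N)‖ = ((n + 1 : ℕ) : ℝ) * ‖N‖ := by
      rw [norm_smul ((n + 1 : ℕ) : ℂ) (lam ^ n • N), norm_smul (lam ^ n) N,
        norm_pow, hlam, one_pow, one_mul, Complex.norm_natCast]
    calc ((n + 1 : ℕ) : ℝ) * ‖N‖ = ‖((n + 1 : ℕ) : ℂ) • (lam ^ n • N)‖ := hnorm.symm
      _ = ‖L ^ (n + 1) * A - lam ^ (n + 1) • A‖ := by rw [h']
      _ ≤ ‖L ^ (n + 1) * A‖ + ‖lam ^ (n + 1) • A‖ := norm_sub_le _ _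
      _ ≤ D + ‖A‖ := by
          have h1 := hb (n + 1)
          have h2 : ‖lam ^ (n + 1) • A‖ = ‖A‖ := by
            rw [norm_smul (lam ^ (n + 1)) A, norm_pow, hlam, one_pow, one_mul]
          linarith
  by_contra hne
  have hpos : 0 < ‖N‖ := norm_pos_iff.mpr hne
  obtain ⟨n, hn⟩ := exists_nat_gt ((D + ‖A‖) / ‖N‖)
  have h1 : (D + ‖A‖) / ‖N‖ < (n + 1 : ℕ) := by push_cast; linarith
  have h2 : D + ‖A‖ < ((n + 1 : ℕ) : ℝ) * ‖N‖ := by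
    rw [div_lt_iff₀ hpos] at h1; linarith
  have := bound n
  linarith


/-- a power-bounded operator has no nontrivial Jordan block at an eigenvalue
of modulus one: if `Π` is a projection commuting with `L` and `((L − λ)Π)^m = 0` for some
`m ≥ 1` with `|λ| = 1`, then `(L − λ)Π = 0`. -/
theorem statement15 {X : Type*} [NormedAddCommGroup X] [NormedSpace ℂ X]
    (L P : X →L[ℂ] X)
    (hpb : ∃ C : ℝ, ∀ n : ℕ, ‖L ^ n‖ ≤ C)
    (lam : ℂ) (hlam : ‖lam‖ = 1)
    (hP : P.comp P = P)
    (hcomm : L.comp P = P.comp L)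
    (m : ℕ) (hm : 1 ≤ m)
    (hnil : ((L - lam • ContinuousLinearMap.id ℂ X).comp P) ^ m = 0) :
    (L - lam • ContinuousLinearMap.id ℂ X).comp P = 0 := by
  obtain ⟨C, hC⟩ := hpb
  have hlam' : ‖lam‖ = 1 := by exact hlam
  have hid : ContinuousLinearMap.id ℂ X = (1 : X →L[ℂ] X) := rfl
  rw [hid] at hnil ⊢
  set T : X →L[ℂ] X := L - lam • 1 with hT
  have hPP : P * P = P := hP
  have hLP : L * P = P * L := hcomm
  have hTP : T * P = P * T := by
    rw [hT, sub_mul, mul_sub, hLP, smul_mul_assoc, mul_smul_comm, one_mul, mul_one]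
  -- (T * P)^m = T^m * P
  have hcom : Commute T P := hTP
  have hPpow : ∀ k : ℕ, P ^ (k + 1) = P := by
    intro k
    induction k with
    | zero => exact pow_one P
    | succ j ih => rw [pow_succ, ih, hPP]
  have hPm : P ^ m = P := by
    obtain ⟨k, hk⟩ := Nat.exists_eq_add_of_le hm
    rw [hk, add_comm]
    exact hPpow k
  have hnil' : T ^ m * P = 0 := by
    rw [← hPm, ← hcom.mul_pow m]
    exact hnil
  -- the family A j = T^j * P
  set A : ℕ → (X →L[ℂ] X) := fun j => T ^ j * P with hAdef
  have hLT : Commute L T := by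
    rw [hT]; exact (Commute.refl L).sub_right (Commute.smul_right (Commute.one_right L) lam)
  have hbound : ∀ j n : ℕ, ‖L ^ n * A j‖ ≤ ‖T ^ j‖ * (C * ‖P‖) := by
    intro j n
    have hc : L ^ n * A j = T ^ j * (L ^ n * P) := by
      rw [hAdef]
      simp only []
      rw [← mul_assoc, ← mul_assoc, (hLT.pow_pow n j).eq]
    rw [hc]
    calc ‖T ^ j * (L ^ n * P)‖ ≤ ‖T ^ j‖ * ‖L ^ n * P‖ := norm_mul_le _ _
      _ ≤ ‖T ^ j‖ * (C * ‖P‖) := by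
          apply mul_le_mul_of_nonneg_left _ (norm_nonneg _)
          exact le_trans (norm_mul_le _ _)
            (mul_le_mul_of_nonneg_right (hC n) (norm_nonneg _))
  -- step: A (j+2) = 0 → A (j+1) = 0
  have hstep : ∀ j : ℕ, A (j + 2) = 0 → A (j + 1) = 0 := by
    intro j h2
    have hkey := jordan_key L (A j) lam hlam' (‖T ^ j‖ * (C * ‖P‖)) (hbound j)
      (by
        rw [hAdef]
        simp only []
        rw [← mul_assoc, ← pow_add]
        rw [hAdef] at h2
        simpa [add_comm] using h2)
    have : T * A j = A (j + 1) := by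
      rw [hAdef]
      simp only []
      rw [← mul_assoc, ← pow_succ']
    rw [← this, hT]
    exact hkey
  -- downward induction
  have hdown : ∀ j : ℕ, A (j + 1) = 0 → A 1 = 0 := by
    intro j
    induction j with
    | zero => exact id
    | succ k ih => intro h; exact ih (hstep k h)
  have hAm : A m = 0 := hnil'
  have h1 : A 1 = 0 := by
    obtain ⟨k, rfl⟩ := Nat.exists_eq_add_of_le hm
    exact hdown k (by rwa [add_comm] at hAm)
  have : T * P = 0 := by
    have := h1
    rw [hAdef] at this
    simpa [pow_one] using this
  exact this
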